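/- Let m ≥ 1 and B be positive integers and a_1, …, a_{3m} be positive integers with B/4 < a_i < B/2 for all i and Σ_{i=1}^{3m} a_i = mB. If there exists a partition of {1, …, 3m} into m pairwise disjoint triples S_1, …, S_m such that Σ_{i ∈ S_k} a_i = B for every k, then there exists a schedule of the reduction tree T(a, B) on p = 3mB processors whose makespan is at most 2m+1 and whose peak memory is at most 3mB + 3m. -/

import Mathlib

/-- A finite rooted in-tree: every node has a parent (the root is its own
parent), and a rank function witnesses that following parents strictly
decreases towards the root, so every node has a unique path to the root. -/
structure InTree where
  V : Type
  [fin : Fintype V]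
  [deq : DecidableEq V]
  root : V
  parent : V → V
  parent_root : parent root = root
  rk : V → ℕ
  rk_lt : ∀ v, v ≠ root → rk (parent v) < rk v
  rk_root : ∀ v, rk v = 0 → v = root

attribute [instance] InTree.fin InTree.deq

/-- A schedule of `T` on `p` processors: at most `p` tasks per unit time step,
and every non-root task finishes before its parent starts. -/
def InTree.IsSchedule (T : InTree) (p : ℕ) (t : T.V → ℕ) : Prop :=
  (∀ s : ℕ, (Finset.univ.filter (fun i => t i = s)).card ≤ p) ∧
  (∀ i : T.V, i ≠ T.root → t i + 1 ≤ t (T.parent i))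

/-- Makespan of a schedule: `max_i (t i + 1)`. -/
def InTree.makespan (T : InTree) (t : T.V → ℕ) : ℕ :=
  Finset.univ.sup (fun i => t i + 1)

/-- Memory used at step `s`: number of nodes `i` with `t i ≤ s` that are the
root or whose parent has not finished before step `s`. -/
def InTree.memAt (T : InTree) (t : T.V → ℕ) (s : ℕ) : ℕ :=
  (Finset.univ.filter (fun i : T.V => t i ≤ s ∧ (i = T.root ∨ s ≤ t (T.parent i)))).card

/-- Peak memory of a schedule: maximum memory usage over steps `0 ≤ s < makespan`. -/
def InTree.peakMemory (T : InTree) (t : T.V → ℕ) : ℕ :=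
  (Finset.range (T.makespan t)).sup (T.memAt t)


/-- Node set of the 3-Partition reduction tree: a root, the nodes `N i`
(`i < 3m`), and for each `i` the `3m * a i` leaf children of `N i`. -/
abbrev RedV (m : ℕ) (a : Fin (3*m) → ℕ) : Type :=
  Unit ⊕ Fin (3*m) ⊕ (Σ i : Fin (3*m), Fin (3*m * a i))

/-- The reduction tree `T(a, B)`: a root whose children are the `N i`,
each `N i` having exactly `3m * a i` leaf children. -/
def redTree (m : ℕ) (a : Fin (3*m) → ℕ) : InTree where
  V := RedV m a
  root := Sum.inl ()
  parent := fun v => match v with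
    | Sum.inl _ => Sum.inl ()
    | Sum.inr (Sum.inl _) => Sum.inl ()
    | Sum.inr (Sum.inr ⟨i, _⟩) => Sum.inr (Sum.inl i)
  parent_root := rfl
  rk := fun v => match v with
    | Sum.inl _ => 0
    | Sum.inr (Sum.inl _) => 1
    | Sum.inr (Sum.inr _) => 2
  rk_lt := by rintro (u | i | ⟨i, j⟩) h
              · cases u; exact absurd rfl h
              · simp
              · simp
  rk_root := by rintro (u | i | s) h
                · cases u; rfl
                · simp at h
                · simp at h

/-- The node `N i` of the reduction tree. -/
def Nnode (m : ℕ) (a : Fin (3*m) → ℕ) (i : Fin (3*m)) : (redTree m a).V :=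
  Sum.inr (Sum.inl i)
lemma card_filter_sigma_fst {ι : Type} [Fintype ι] [DecidableEq ι] (β : ι → Type) [∀ i, Fintype (β i)] (q : ι → Prop) [DecidablePred q] :
    (Finset.univ.filter (fun x : Σ i, β i => q x.1)).card = ∑ i ∈ Finset.univ.filter q, Fintype.card (β i) := by
  rw [Finset.card_filter, ← Finset.univ_sigma_univ, Finset.sum_sigma, Finset.sum_filter]
  refine Finset.sum_congr rfl fun i _ => ?_
  by_cases h : q i <;> simp [h, Finset.card_univ]

lemma card_filter_sum3 {α β γ : Type} [Fintype α] [Fintype β] [Fintype γ]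
    (P : α ⊕ β ⊕ γ → Prop) [DecidablePred P] :
    (Finset.univ.filter P).card =
      (Finset.univ.filter (fun u : α => P (Sum.inl u))).card
      + (Finset.univ.filter (fun i : β => P (Sum.inr (Sum.inl i)))).card
      + (Finset.univ.filter (fun x : γ => P (Sum.inr (Sum.inr x)))).card := by
  rw [Finset.card_filter, Fintype.sum_sum_type, Fintype.sum_sum_type,
    ← Finset.card_filter, ← Finset.card_filter, ← Finset.card_filter]
  ring


/-- If the 3-Partition instance has a solution, then the reduction tree
`T(a, B)` admits a schedule on `3mB` processors with makespan at most `2m+1`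
and peak memory at most `3mB + 3m`. -/
theorem stmt1 (m B : ℕ) (hm : 1 ≤ m) (hB : 1 ≤ B) (a : Fin (3*m) → ℕ)
    (ha : ∀ i, B < 4 * a i ∧ 2 * a i < B) (hsum : ∑ i, a i = m * B)
    (hpart : ∃ S : Fin m → Finset (Fin (3*m)),
      (∀ k, (S k).card = 3) ∧ (∀ i, ∃! k, i ∈ S k) ∧ (∀ k, ∑ i ∈ S k, a i = B)) :
    ∃ t : (redTree m a).V → ℕ, (redTree m a).IsSchedule (3*m*B) t ∧
      (redTree m a).makespan t ≤ 2*m + 1 ∧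
      (redTree m a).peakMemory t ≤ 3*m*B + 3*m := by
  classical
  obtain ⟨S, hc, hu, hBsum⟩ := hpart
  choose k hk1 hk2 using hu
  have hmemiff : ∀ (i : Fin (3*m)) (c : Fin m), i ∈ S c ↔ k i = c :=
    fun i c => ⟨fun h => (hk2 i c h).symm, fun h => h ▸ hk1 i⟩
  have hfilt : ∀ c : Fin m, Finset.univ.filter (fun i => k i = c) = S c := by
    intro c; ext i; simp [hmemiff]
  -- the schedule
  set t : (redTree m a).V → ℕ :=
    Sum.elim (fun _ => 2*m) (Sum.elim (fun i => 2*(k i : ℕ)+1) (fun x => 2*(k x.1 : ℕ))) with ht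
  -- sum over an S-block of leaf counts
  have hblock : ∀ c : Fin m, ∑ i ∈ S c, 3*m*a i = 3*m*B := by
    intro c
    rw [← Finset.mul_sum, hBsum c]
  have hkv : ∀ i, (k i : ℕ) < m := fun i => (k i).isLt
  refine ⟨t, ⟨?_, ?_⟩, ?_, ?_⟩
  · -- processor bound
    intro s
    refine le_trans (le_of_eq (card_filter_sum3 (fun v => t v = s))) ?_
    have hsig : (Finset.univ.filter (fun x : Σ i : Fin (3*m), Fin (3*m*a i) => t (Sum.inr (Sum.inr x)) = s)).card
        = ∑ i ∈ Finset.univ.filter (fun i => 2*(k i : ℕ) = s), 3*m*a i := by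
      exact (card_filter_sigma_fst (fun i : Fin (3*m) => Fin (3*m*a i))
        (fun i => 2*(k i : ℕ) = s)).trans (by simp)
    rw [hsig]
    rcases Nat.even_or_odd s with ⟨c, hc2⟩ | ⟨c, hc2⟩
    · -- even step: s = c + c
      have hN : (Finset.univ.filter (fun i : Fin (3*m) => t (Sum.inr (Sum.inl i)) = s)).card = 0 := by
        rw [Finset.card_eq_zero, Finset.filter_eq_empty_iff]
        intro i _; simp only [ht, Sum.elim_inr, Sum.elim_inl]; omega
      by_cases hcm : c < m
      · have hU : (Finset.univ.filter (fun u : Unit => t (Sum.inl u) = s)).card = 0 := by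
          rw [Finset.card_eq_zero, Finset.filter_eq_empty_iff]
          intro u _; simp only [ht, Sum.elim_inl]; omega
        have hL : (Finset.univ.filter (fun i : Fin (3*m) => 2*(k i : ℕ) = s)) = S ⟨c, hcm⟩ := by
          rw [← hfilt ⟨c, hcm⟩]
          apply Finset.filter_congr
          intro i _
          simp only [eq_iff_iff, Fin.ext_iff]
          omega
        rw [hU, hN, hL, hblock]
        simp
      · have hL : (Finset.univ.filter (fun i : Fin (3*m) => 2*(k i : ℕ) = s)) = ∅ := by
          rw [Finset.filter_eq_empty_iff]; intro i _; have := hkv i; omega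
        rw [hN, hL]
        simp only [Finset.card_empty, add_zero, zero_add]
        calc (Finset.univ.filter (fun u : Unit => t (Sum.inl u) = s)).card
            ≤ Fintype.card Unit := Finset.card_filter_le _ _
          _ ≤ 3*m*B := by simp; nlinarith
    · -- odd step
      have hU : (Finset.univ.filter (fun u : Unit => t (Sum.inl u) = s)).card = 0 := by
        rw [Finset.card_eq_zero, Finset.filter_eq_empty_iff]
        intro u _; simp only [ht, Sum.elim_inl]; omega
      have hL : (Finset.univ.filter (fun i : Fin (3*m) => 2*(k i : ℕ) = s)) = ∅ := by
        rw [Finset.filter_eq_empty_iff]; intro i _; omega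
      rw [hU, hL]
      simp only [Finset.card_empty, add_zero, zero_add]
      calc (Finset.univ.filter (fun i : Fin (3*m) => t (Sum.inr (Sum.inl i)) = s)).card
          ≤ Fintype.card (Fin (3*m)) := Finset.card_filter_le _ _
        _ ≤ 3*m*B := by simp; nlinarith
  · -- precedence
    rintro (u | i | ⟨i, j⟩) hne
    · cases u; exact absurd rfl hne
    · show 2*(k i : ℕ) + 1 + 1 ≤ 2*m
      have := hkv i; omega
    · show 2*(k i : ℕ) + 1 ≤ 2*(k i : ℕ) + 1
      exact le_rfl
  · -- makespan
    apply Finset.sup_le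
    rintro (u | i | ⟨i, j⟩) _
    · show 2*m + 1 ≤ 2*m + 1; exact le_rfl
    · show 2*(k i : ℕ) + 1 + 1 ≤ 2*m + 1; have := hkv i; omega
    · show 2*(k i : ℕ) + 1 ≤ 2*m + 1; have := hkv i; omega
  · -- peak memory
    apply Finset.sup_le
    intro s _
    unfold InTree.memAt
    refine le_trans (le_of_eq (Eq.trans (by congr 1; ext x; simp; exact ⟨fun h => Finset.mem_filter.2 ⟨Finset.mem_univ _, h⟩, fun h => (Finset.mem_filter.1 h).2⟩) (card_filter_sum3
      (fun v => t v ≤ s ∧ (v = (redTree m a).root ∨ s ≤ t ((redTree m a).parent v)))))) ?_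
    have hN : (Finset.univ.filter (fun i : Fin (3*m) =>
        t (Sum.inr (Sum.inl i)) ≤ s ∧ (Sum.inr (Sum.inl i) = (redTree m a).root ∨
          s ≤ t ((redTree m a).parent (Sum.inr (Sum.inl i)))))).card ≤ 3*m := by
      calc (Finset.univ.filter (fun i : Fin (3*m) =>
            t (Sum.inr (Sum.inl i)) ≤ s ∧ (Sum.inr (Sum.inl i) = (redTree m a).root ∨
              s ≤ t ((redTree m a).parent (Sum.inr (Sum.inl i)))))).card
          ≤ Fintype.card (Fin (3*m)) := Finset.card_filter_le _ _
        _ = 3*m := by simp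
    have hsig : (Finset.univ.filter (fun x : Σ i : Fin (3*m), Fin (3*m*a i) =>
        t (Sum.inr (Sum.inr x)) ≤ s ∧ (Sum.inr (Sum.inr x) = (redTree m a).root ∨
          s ≤ t ((redTree m a).parent (Sum.inr (Sum.inr x))))))
        = (Finset.univ.filter (fun x : Σ i : Fin (3*m), Fin (3*m*a i) =>
            (fun i => 2*(k i : ℕ) ≤ s ∧ s ≤ 2*(k i : ℕ) + 1) x.1)) := by
      ext ⟨i, j⟩
      simp [ht, redTree]
    rw [hsig, card_filter_sigma_fst (fun i : Fin (3*m) => Fin (3*m*a i))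
      (fun i => 2*(k i : ℕ) ≤ s ∧ s ≤ 2*(k i : ℕ) + 1)]
    simp only [Fintype.card_fin]
    by_cases hs2 : s < 2*m
    · -- before the root step: no root in memory, current leaf batch + N nodes
      have hU : (Finset.univ.filter (fun u : Unit =>
          t (Sum.inl u) ≤ s ∧ (Sum.inl u = (redTree m a).root ∨
            s ≤ t ((redTree m a).parent (Sum.inl u))))).card = 0 := by
        rw [Finset.card_eq_zero, Finset.filter_eq_empty_iff]
        intro u _
        intro hcon
        have h1 : 2*m ≤ s := hcon.1
        omega
      have hsm : s / 2 < m := by omega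
      have hL : Finset.univ.filter (fun i : Fin (3*m) =>
          2*(k i : ℕ) ≤ s ∧ s ≤ 2*(k i : ℕ) + 1) ⊆ S ⟨s/2, hsm⟩ := by
        intro i hi
        simp only [Finset.mem_filter] at hi
        refine (hmemiff i _).mpr ?_
        apply Fin.ext
        show (k i : ℕ) = s/2
        omega
      have hLsum : ∑ i ∈ Finset.univ.filter (fun i : Fin (3*m) =>
          2*(k i : ℕ) ≤ s ∧ s ≤ 2*(k i : ℕ) + 1), 3*m*a i ≤ 3*m*B := by
        calc ∑ i ∈ Finset.univ.filter (fun i : Fin (3*m) =>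
              2*(k i : ℕ) ≤ s ∧ s ≤ 2*(k i : ℕ) + 1), 3*m*a i
            ≤ ∑ i ∈ S ⟨s/2, hsm⟩, 3*m*a i :=
              Finset.sum_le_sum_of_subset hL
          _ = 3*m*B := hblock _
      rw [hU, zero_add, add_comm]
      exact add_le_add hLsum hN
    · -- root step and beyond: no leaves in memory
      have hL0 : Finset.univ.filter (fun i : Fin (3*m) =>
          2*(k i : ℕ) ≤ s ∧ s ≤ 2*(k i : ℕ) + 1) = ∅ := by
        rw [Finset.filter_eq_empty_iff]
        intro i _
        have := hkv i
        omega
      rw [hL0]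
      simp only [Finset.sum_empty, add_zero]
      have hU1 : (Finset.univ.filter (fun u : Unit =>
          t (Sum.inl u) ≤ s ∧ (Sum.inl u = (redTree m a).root ∨
            s ≤ t ((redTree m a).parent (Sum.inl u))))).card ≤ 1 :=
        le_trans (Finset.card_filter_le _ _) (by simp)
      have h1 : 1 ≤ 3*m*B := Nat.one_le_iff_ne_zero.mpr (by positivity)
      exact le_trans (add_le_add hU1 hN) (add_le_add h1 le_rfl)
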